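/- Let φ ∈ C(𝕋ⁿ) be a kernel with φ ≥ c₁ > 0, and suppose V(t,α) solves the agent-based dynamics V̇(t,α) = w(t,α) ∫ φ(X(t,α) - X(t,β)) (V(t,β) - V(t,α)) ρ₀(β) dβ with w(t,α) ≥ w₋ > 0 and ∫ρ₀ = M. Then the velocity diameter A(t) := max_{α,β} |V(t,α) - V(t,β)| satisfies A(t) ≤ A(0) e^{-w₋ M c₁ t}. -/

import Mathlib

open MeasureTheory Filter
open scoped RealInnerProductSpace

instance : Fact (0 < 2 * Real.pi) := ⟨by positivity⟩

set_option maxHeartbeats 2000000 in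
/-- L∞ exponential alignment for the Lagrangian s-model: if `φ ≥ c₁ > 0`,
`w ≥ wlo > 0`, `∫ρ₀ = M`, and `V̇(t,α) = w(t,α)∫ φ(X(t,α)-X(t,β))(V(t,β)-V(t,α))ρ₀(β)dβ`,
then the velocity diameter decays: `A(t) ≤ A(0) e^{-wlo M c₁ t}`. -/
theorem stmt_14 {n d : ℕ}
    (φ ρ₀ : (Fin n → AddCircle (2 * Real.pi)) → ℝ)
    (w : ℝ → (Fin n → AddCircle (2 * Real.pi)) → ℝ)
    (X : ℝ → (Fin n → AddCircle (2 * Real.pi)) → (Fin n → AddCircle (2 * Real.pi)))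
    (V : ℝ → (Fin n → AddCircle (2 * Real.pi)) → EuclideanSpace ℝ (Fin d))
    (c₁ wlo M A0 : ℝ) (hc₁ : 0 < c₁) (hwlo : 0 < wlo)
    (hφc : Continuous φ) (hφ : ∀ z, c₁ ≤ φ z)
    (hρc : Continuous ρ₀) (hρ0 : ∀ α, 0 ≤ ρ₀ α) (hM : ∫ α, ρ₀ α = M)
    (hw : ∀ t α, wlo ≤ w t α)
    (hVc : Continuous (fun p : ℝ × (Fin n → AddCircle (2 * Real.pi)) => V p.1 p.2))
    (hXc : Continuous (fun p : ℝ × (Fin n → AddCircle (2 * Real.pi)) => X p.1 p.2))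
    (hode : ∀ t α, HasDerivAt (fun s => V s α)
        (w t α • ∫ β, (φ (X t α - X t β) * ρ₀ β) • (V t β - V t α)) t)
    (hA0 : ∀ α β, ‖V 0 α - V 0 β‖ ≤ A0) :
    ∀ t, 0 ≤ t → ∀ α β,
      ‖V t α - V t β‖ ≤ A0 * Real.exp (-(wlo * M * c₁ * t)) := by
  set lam : ℝ := wlo * M * c₁ with hlam
  have hA0nn : 0 ≤ A0 := le_trans (by simp) (hA0 (Classical.arbitrary (Fin n → AddCircle (2 * Real.pi))) (Classical.arbitrary (Fin n → AddCircle (2 * Real.pi))))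
  -- the key claim with relaxed constants
  have key : ∀ ε : ℝ, 0 < ε → ∀ t, 0 ≤ t → ∀ α β,
      ‖V t α - V t β‖ ≤ (A0 + ε) * Real.exp (-((lam - ε) * t)) := by
    intro ε hε ts hts αs βs
    by_contra hcon
    push_neg at hcon
    set B : ℝ → ℝ := fun s => (A0 + ε) * Real.exp (-((lam - ε) * s)) with hB
    have hBpos : ∀ s, 0 < B s := fun s => mul_pos (by linarith) (Real.exp_pos _)
    set g : ℝ → (Fin n → AddCircle (2 * Real.pi)) → (Fin n → AddCircle (2 * Real.pi)) → ℝ := fun s a b => ‖V s a - V s b‖ with hg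
    -- continuity facts
    have hgc : Continuous (fun p : ℝ × ((Fin n → AddCircle (2 * Real.pi)) × (Fin n → AddCircle (2 * Real.pi))) => g p.1 p.2.1 p.2.2) := by
      apply Continuous.norm
      exact (hVc.comp (continuous_fst.prodMk (continuous_fst.comp continuous_snd))).sub
        (hVc.comp (continuous_fst.prodMk (continuous_snd.comp continuous_snd)))
    have hBc : Continuous B := by
      apply continuous_const.mul
      exact (((continuous_const.mul continuous_id).neg).rexp)
    -- the compact "bad" set
    set K : Set (ℝ × (Fin n → AddCircle (2 * Real.pi)) × (Fin n → AddCircle (2 * Real.pi))) :=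
      {p | p.1 ∈ Set.Icc 0 ts ∧ B p.1 ≤ g p.1 p.2.1 p.2.2} with hK
    have hKcl : IsClosed K := by
      apply IsClosed.inter
      · exact isClosed_Icc.preimage continuous_fst
      · exact isClosed_le (hBc.comp continuous_fst) hgc
    have hKcp : IsCompact K := by
      have h0 : IsCompact ((Set.Icc (0:ℝ) ts) ×ˢ (Set.univ : Set ((Fin n → AddCircle (2 * Real.pi)) × (Fin n → AddCircle (2 * Real.pi))))) :=
        isCompact_Icc.prod isCompact_univ
      exact h0.of_isClosed_subset hKcl (fun p hp => ⟨hp.1, Set.mem_univ _⟩)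
    set S : Set ℝ := Prod.fst '' K with hS
    have hScp : IsCompact S := hKcp.image continuous_fst
    have hSne : S.Nonempty := ⟨ts, ⟨(ts, αs, βs), ⟨⟨hts, le_refl ts⟩, hcon.le⟩, rfl⟩⟩
    obtain ⟨t₀, ht₀S, ht₀least⟩ := hScp.exists_isLeast hSne
    obtain ⟨⟨t₀', a₀, b₀⟩, ⟨ht₀Icc, ht₀ge⟩, ht₀eq⟩ := ht₀S
    subst ht₀eq
    -- t₀ > 0
    have ht₀pos : 0 < t₀' := by
      rcases lt_or_eq_of_le ht₀Icc.1 with h | h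
      · exact h
      · exfalso
        have h1 : g 0 a₀ b₀ ≤ A0 := hA0 a₀ b₀
        have h2 : B 0 = A0 + ε := by simp [hB]
        rw [← h] at ht₀ge
        rw [h2] at ht₀ge
        linarith
    -- before t₀, everything is strictly below B
    have hbefore : ∀ s, 0 ≤ s → s < t₀' → ∀ a b, g s a b < B s := by
      intro s hs hst a b
      by_contra hc
      push_neg at hc
      have : s ∈ S := ⟨(s, a, b), ⟨⟨hs, hst.le.trans ht₀Icc.2⟩, hc⟩, rfl⟩
      exact absurd (ht₀least this) (not_le.mpr hst)
    -- maximizing pair at t₀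
    have hgt₀c : Continuous (fun p : (Fin n → AddCircle (2 * Real.pi)) × (Fin n → AddCircle (2 * Real.pi)) => g t₀' p.1 p.2) :=
      by
      apply Continuous.norm
      exact (hVc.comp (continuous_const.prodMk continuous_fst)).sub
        (hVc.comp (continuous_const.prodMk continuous_snd))
    obtain ⟨⟨a, b⟩, -, hmax⟩ := isCompact_univ.exists_isMaxOn
      (Set.univ_nonempty) (hgt₀c.continuousOn)
    have hmax' : ∀ x y, g t₀' x y ≤ g t₀' a b := fun x y =>
      (isMaxOn_iff.mp hmax) (x, y) (Set.mem_univ _)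
    -- g t₀' a b = B t₀'
    have hgeB : B t₀' ≤ g t₀' a b := le_trans ht₀ge (hmax' a₀ b₀)
    have hleB : g t₀' a b ≤ B t₀' := by
      haveI hne : (nhdsWithin t₀' (Set.Iio t₀')).NeBot := by
        exact (nhdsLT_neBot t₀')
      have h1 : Tendsto (fun s => g s a b) (nhdsWithin t₀' (Set.Iio t₀')) (nhds (g t₀' a b)) :=
        ((hgc.comp (Continuous.prodMk continuous_id (continuous_const : Continuous fun _ : ℝ => (a, b)))).tendsto t₀').mono_left nhdsWithin_le_nhds
      have h2 : Tendsto B (nhdsWithin t₀' (Set.Iio t₀')) (nhds (B t₀')) :=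
        (hBc.tendsto t₀').mono_left nhdsWithin_le_nhds
      refine le_of_tendsto_of_tendsto h1 h2 ?_
      filter_upwards [Ioo_mem_nhdsLT_of_mem (Set.mem_Ioc.mpr ⟨ht₀pos, le_refl t₀'⟩)] with s hs
      exact (hbefore s hs.1.le hs.2 a b).le
    have hgB : g t₀' a b = B t₀' := le_antisymm hleB hgeB
    -- set up derivative machinery
    set u : ℝ → EuclideanSpace ℝ (Fin d) := fun s => V s a - V s b with hu
    have hnormu : ‖u t₀'‖ = B t₀' := hgB
    set Ia : EuclideanSpace ℝ (Fin d) :=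
      ∫ γ, (φ (X t₀' a - X t₀' γ) * ρ₀ γ) • (V t₀' γ - V t₀' a) with hIa
    set Ib : EuclideanSpace ℝ (Fin d) :=
      ∫ γ, (φ (X t₀' b - X t₀' γ) * ρ₀ γ) • (V t₀' γ - V t₀' b) with hIb
    set D : EuclideanSpace ℝ (Fin d) := w t₀' a • Ia - w t₀' b • Ib with hD
    have hud : HasDerivAt u D t₀' := (hode t₀' a).sub (hode t₀' b)
    -- continuity helpers at time t₀'
    have hVt : Continuous (V t₀') := hVc.comp (Continuous.prodMk_right t₀')
    have hXt : Continuous (X t₀') := hXc.comp (Continuous.prodMk_right t₀')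
    have hinteg : ∀ (f : (Fin n → AddCircle (2 * Real.pi)) → ℝ), Continuous f → Integrable f := fun f hf =>
      hf.integrable_of_hasCompactSupport (HasCompactSupport.of_compactSpace f)
    have hintegE : ∀ (f : (Fin n → AddCircle (2 * Real.pi)) → EuclideanSpace ℝ (Fin d)), Continuous f → Integrable f := fun f hf =>
      hf.integrable_of_hasCompactSupport (HasCompactSupport.of_compactSpace f)
    -- key inner product estimate
    have hkey : ⟪D, u t₀'⟫ ≤ -lam * ‖u t₀'‖^2 := by
      set s1 := fun γ => ⟪V t₀' γ - V t₀' a, u t₀'⟫ with hs1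
      set s2 := fun γ => ⟪V t₀' γ - V t₀' b, u t₀'⟫ with hs2
      have hs1c : Continuous s1 := (hVt.sub continuous_const).inner continuous_const
      have hs2c : Continuous s2 := (hVt.sub continuous_const).inner continuous_const
      have hs12 : ∀ γ, s1 γ - s2 γ = -‖u t₀'‖^2 := by
        intro γ
        simp only [hs1, hs2]
        rw [← inner_sub_left]
        have : V t₀' γ - V t₀' a - (V t₀' γ - V t₀' b) = -(u t₀') := by
          simp only [hu]
          abel
        rw [this, inner_neg_left, real_inner_self_eq_norm_sq]
      have hs1np : ∀ γ, s1 γ ≤ 0 := by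
        intro γ
        have h1 : s1 γ = ⟪V t₀' γ - V t₀' b, u t₀'⟫ - ‖u t₀'‖^2 := by
          have := hs12 γ; linarith
        have h2 : ⟪V t₀' γ - V t₀' b, u t₀'⟫ ≤ ‖V t₀' γ - V t₀' b‖ * ‖u t₀'‖ :=
          real_inner_le_norm _ _
        have h3 : ‖V t₀' γ - V t₀' b‖ ≤ ‖u t₀'‖ := hmax' γ b
        nlinarith [norm_nonneg (u t₀')]
      have hs2nn : ∀ γ, 0 ≤ s2 γ := by
        intro γ
        have h1 : s2 γ = s1 γ + ‖u t₀'‖^2 := by have := hs12 γ; linarith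
        have h2 : -⟪V t₀' γ - V t₀' a, u t₀'⟫ ≤ ‖V t₀' γ - V t₀' a‖ * ‖u t₀'‖ := by
          rw [← inner_neg_left]; exact (real_inner_le_norm _ _).trans_eq (by rw [norm_neg])
        have h3 : ‖V t₀' γ - V t₀' a‖ ≤ ‖u t₀'‖ := by
          have := hmax' γ a
          simpa [hg, hu] using this
        have : -(‖u t₀'‖ * ‖u t₀'‖) ≤ s1 γ := by
          simp only [hs1]
          nlinarith [norm_nonneg (u t₀')]
        nlinarith
      -- integrability
      have hfa : Continuous (fun γ => (φ (X t₀' a - X t₀' γ) * ρ₀ γ) • (V t₀' γ - V t₀' a)) :=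
        ((hφc.comp (continuous_const.sub hXt)).mul hρc).smul (hVt.sub continuous_const)
      have hfb : Continuous (fun γ => (φ (X t₀' b - X t₀' γ) * ρ₀ γ) • (V t₀' γ - V t₀' b)) :=
        ((hφc.comp (continuous_const.sub hXt)).mul hρc).smul (hVt.sub continuous_const)
      have hIau : ⟪Ia, u t₀'⟫ = ∫ γ, (φ (X t₀' a - X t₀' γ) * ρ₀ γ) * s1 γ := by
        rw [real_inner_comm, hIa, ← integral_inner (hintegE _ hfa)]
        congr 1; ext γ
        rw [real_inner_smul_right, real_inner_comm]
      have hIbu : ⟪Ib, u t₀'⟫ = ∫ γ, (φ (X t₀' b - X t₀' γ) * ρ₀ γ) * s2 γ := by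
        rw [real_inner_comm, hIb, ← integral_inner (hintegE _ hfb)]
        congr 1; ext γ
        rw [real_inner_smul_right, real_inner_comm]
      -- estimates on the two integrals
      have hIa1 : ⟪Ia, u t₀'⟫ ≤ c₁ * ∫ γ, ρ₀ γ * s1 γ := by
        rw [hIau, ← integral_const_mul]
        apply integral_mono
        · exact hinteg _ (((hφc.comp (continuous_const.sub hXt)).mul hρc).mul hs1c)
        · exact hinteg _ (continuous_const.mul (hρc.mul hs1c))
        · intro γ
          have := mul_le_mul_of_nonneg_left (hφ (X t₀' a - X t₀' γ)) (hρ0 γ)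
          calc (φ (X t₀' a - X t₀' γ) * ρ₀ γ) * s1 γ ≤ (c₁ * ρ₀ γ) * s1 γ := by
                apply mul_le_mul_of_nonpos_right _ (hs1np γ)
                nlinarith
            _ = c₁ * (ρ₀ γ * s1 γ) := by ring
      have hIb1 : c₁ * ∫ γ, ρ₀ γ * s2 γ ≤ ⟪Ib, u t₀'⟫ := by
        rw [hIbu, ← integral_const_mul]
        apply integral_mono
        · exact hinteg _ (continuous_const.mul (hρc.mul hs2c))
        · exact hinteg _ (((hφc.comp (continuous_const.sub hXt)).mul hρc).mul hs2c)
        · intro γ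
          have := mul_le_mul_of_nonneg_left (hφ (X t₀' b - X t₀' γ)) (hρ0 γ)
          calc c₁ * (ρ₀ γ * s2 γ) = (c₁ * ρ₀ γ) * s2 γ := by ring
            _ ≤ (φ (X t₀' b - X t₀' γ) * ρ₀ γ) * s2 γ := by
                apply mul_le_mul_of_nonneg_right _ (hs2nn γ)
                nlinarith
      have hint1np : (∫ γ, ρ₀ γ * s1 γ) ≤ 0 :=
        integral_nonpos (fun γ => mul_nonpos_of_nonneg_of_nonpos (hρ0 γ) (hs1np γ))
      have hint2nn : 0 ≤ (∫ γ, ρ₀ γ * s2 γ) :=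
        integral_nonneg (fun γ => mul_nonneg (hρ0 γ) (hs2nn γ))
      have hIanp : ⟪Ia, u t₀'⟫ ≤ 0 := hIa1.trans (by nlinarith)
      have hIbnn : 0 ≤ ⟪Ib, u t₀'⟫ := le_trans (by nlinarith) hIb1
      have hterm1 : w t₀' a * ⟪Ia, u t₀'⟫ ≤ wlo * (c₁ * ∫ γ, ρ₀ γ * s1 γ) := by
        calc w t₀' a * ⟪Ia, u t₀'⟫ ≤ wlo * ⟪Ia, u t₀'⟫ :=
              mul_le_mul_of_nonpos_right (hw t₀' a) hIanp
          _ ≤ wlo * (c₁ * ∫ γ, ρ₀ γ * s1 γ) := mul_le_mul_of_nonneg_left hIa1 hwlo.le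
      have hterm2 : -(w t₀' b * ⟪Ib, u t₀'⟫) ≤ -(wlo * (c₁ * ∫ γ, ρ₀ γ * s2 γ)) := by
        have h1 : wlo * ⟪Ib, u t₀'⟫ ≤ w t₀' b * ⟪Ib, u t₀'⟫ :=
          mul_le_mul_of_nonneg_right (hw t₀' b) hIbnn
        have h2 : wlo * (c₁ * ∫ γ, ρ₀ γ * s2 γ) ≤ wlo * ⟪Ib, u t₀'⟫ :=
          mul_le_mul_of_nonneg_left hIb1 hwlo.le
        linarith
      have hDu : ⟪D, u t₀'⟫ = w t₀' a * ⟪Ia, u t₀'⟫ - w t₀' b * ⟪Ib, u t₀'⟫ := by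
        rw [hD, inner_sub_left, real_inner_smul_left, real_inner_smul_left]
      have hdiff : (∫ γ, ρ₀ γ * s1 γ) - (∫ γ, ρ₀ γ * s2 γ) = -M * ‖u t₀'‖^2 := by
        rw [← integral_sub (hinteg (fun γ => ρ₀ γ * s1 γ) (hρc.mul hs1c)) (hinteg (fun γ => ρ₀ γ * s2 γ) (hρc.mul hs2c))]
        have : ∀ γ, ρ₀ γ * s1 γ - ρ₀ γ * s2 γ = (-‖u t₀'‖^2) * ρ₀ γ := by
          intro γ
          rw [← mul_sub, hs12 γ]; ring
        simp_rw [this]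
        rw [integral_const_mul, hM]; ring
      calc ⟪D, u t₀'⟫ = w t₀' a * ⟪Ia, u t₀'⟫ - w t₀' b * ⟪Ib, u t₀'⟫ := hDu
        _ ≤ wlo * (c₁ * ∫ γ, ρ₀ γ * s1 γ) - wlo * (c₁ * ∫ γ, ρ₀ γ * s2 γ) := by linarith
        _ = wlo * c₁ * ((∫ γ, ρ₀ γ * s1 γ) - (∫ γ, ρ₀ γ * s2 γ)) := by ring
        _ = wlo * c₁ * (-M * ‖u t₀'‖^2) := by rw [hdiff]
        _ = -lam * ‖u t₀'‖^2 := by rw [hlam]; ring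
    -- derivatives of squared quantities
    have hsq : HasDerivAt (fun s => ⟪u s, u s⟫) (2 * ⟪D, u t₀'⟫) t₀' := by
      have := hud.inner ℝ hud
      have h2 : ⟪u t₀', D⟫ + ⟪D, u t₀'⟫ = 2 * ⟪D, u t₀'⟫ := by
        rw [real_inner_comm]; ring
      rw [h2] at this; exact this
    have hBd : HasDerivAt B (-(lam - ε) * B t₀') t₀' := by
      have h1 : HasDerivAt (fun s : ℝ => -((lam - ε) * s)) (-(lam - ε)) t₀' := by
        simpa using ((hasDerivAt_id t₀').const_mul (lam - ε)).fun_neg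
      have h2 := (h1.exp).const_mul (A0 + ε)
      exact h2.congr_deriv (by simp only [hB]; ring)
    have hB2d : HasDerivAt (fun s => B s * B s) (2 * (-(lam - ε)) * B t₀' ^ 2) t₀' := by
      have := hBd.mul hBd
      exact this.congr_deriv (by ring)
    set h : ℝ → ℝ := fun s => ⟪u s, u s⟫ - B s * B s with hh
    have hhd : HasDerivAt h (2 * ⟪D, u t₀'⟫ - 2 * (-(lam - ε)) * B t₀' ^ 2) t₀' := hsq.sub hB2d
    have hht₀ : h t₀' = 0 := by
      simp only [hh]
      rw [real_inner_self_eq_norm_sq, hnormu]; ring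
    have hhnp : ∀ s, 0 ≤ s → s < t₀' → h s ≤ 0 := by
      intro s hs hst
      have h1 : g s a b < B s := hbefore s hs hst a b
      have h2 : (0:ℝ) ≤ g s a b := norm_nonneg _
      simp only [hh]
      rw [real_inner_self_eq_norm_sq]
      have : ‖u s‖ = g s a b := rfl
      rw [this]; nlinarith
    -- the derivative of h at t₀' is nonneg (left max)
    have hderiv_nonneg : 0 ≤ 2 * ⟪D, u t₀'⟫ - 2 * (-(lam - ε)) * B t₀' ^ 2 := by
      have hslope := hasDerivAt_iff_tendsto_slope.mp hhd
      have hslope' : Tendsto (slope h t₀') (nhdsWithin t₀' (Set.Iio t₀'))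
          (nhds (2 * ⟪D, u t₀'⟫ - 2 * (-(lam - ε)) * B t₀' ^ 2)) :=
        hslope.mono_left (nhdsWithin_mono _ (fun x hx => ne_of_lt hx))
      have hne : (nhdsWithin t₀' (Set.Iio t₀')).NeBot := nhdsLT_neBot t₀'
      refine ge_of_tendsto hslope' ?_
      filter_upwards [Ioo_mem_nhdsLT_of_mem (Set.mem_Ioc.mpr ⟨ht₀pos, le_refl t₀'⟩)] with s hs
      have h1 : h s ≤ 0 := hhnp s hs.1.le hs.2
      have h2 : s - t₀' < 0 := sub_neg.mpr hs.2
      have hs0 : slope h t₀' s = h s / (s - t₀') := by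
        rw [slope_def_field, hht₀, sub_zero]
      rw [hs0]
      exact div_nonneg_iff.mpr (Or.inr ⟨h1, h2.le⟩)
    -- contradiction
    have hfinal : 2 * ⟪D, u t₀'⟫ - 2 * (-(lam - ε)) * B t₀' ^ 2
        ≤ -2 * ε * B t₀' ^ 2 := by
      have h1 : ‖u t₀'‖ ^ 2 = B t₀' ^ 2 := by rw [hnormu]
      have := hkey
      rw [h1] at this
      nlinarith
    have hBsq : 0 < B t₀' ^ 2 := pow_pos (hBpos t₀') 2
    nlinarith
  -- take ε → 0⁺
  intro t ht α β
  have hlim : Tendsto (fun ε : ℝ => (A0 + ε) * Real.exp (-((lam - ε) * t)))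
      (nhdsWithin 0 (Set.Ioi 0)) (nhds (A0 * Real.exp (-(lam * t)))) := by
    have hc : Continuous (fun ε : ℝ => (A0 + ε) * Real.exp (-((lam - ε) * t))) := by
      apply (continuous_const.add continuous_id).mul
      exact (((continuous_const.sub continuous_id).mul continuous_const).neg).rexp
    have := hc.tendsto 0
    simp only [add_zero, sub_zero] at this
    exact this.mono_left nhdsWithin_le_nhds
  refine ge_of_tendsto hlim ?_
  filter_upwards [eventually_mem_nhdsWithin] with ε hε
  exact key ε hε t ht α β
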